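/- The function g is nowhere differentiable on [0,1]: for every x in [0,1], g is not differentiable at x. In fact, every subinterval of [0,1] of length 1/2^n contains two points x, y with |g(x) − g(y)| > 1/2^{n+2}, so that |g(x) − g(y)|/|x − y| > 1/4. -/

import Mathlib

open Filter Topology

noncomputable section

/-- The `n`-th binary digit of `x` (the terminating expansion at dyadic
rationals): `x_n = ⌊2^n x⌋ mod 2`. -/
def binDigit (n : ℕ) (x : ℝ) : ℝ :=
  ((⌊(2 : ℝ) ^ n * x⌋ % 2 : ℤ) : ℝ)

/-- `g(x) = -∑_{n ≥ 1} (n/2) x_n / 2^n` where `x = ∑ x_n / 2^n` is the binary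
expansion of `x`. -/
def gfun (x : ℝ) : ℝ :=
  -∑' n : ℕ, ((n + 1 : ℝ) / 2) * binDigit (n + 1) x / 2 ^ (n + 1)

/-! ### Auxiliary natural-number lemmas -/

def Tnat (k : ℕ) : ℕ := ∑ p ∈ Finset.range (k+1), p * (k / 2^p % 2) * 2^p

lemma bit_zero_of_lt {k p : ℕ} (h : k < 2^p) : k / 2^p % 2 = 0 := by
  rw [Nat.div_eq_of_lt h]

lemma bit_vanish {k p : ℕ} (h : k < 2^p) (q : ℕ) (hq : p ≤ q) : k / 2^q % 2 = 0 :=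
  bit_zero_of_lt (lt_of_lt_of_le h (Nat.pow_le_pow_right two_pos hq))

lemma Tnat_eq (k N : ℕ) (h : k < 2^N) :
    Tnat k = ∑ p ∈ Finset.range N, p * (k / 2^p % 2) * 2^p := by
  have hk : k < 2^(k+1) := (@Nat.lt_two_pow_self k).trans (Nat.pow_lt_pow_right one_lt_two (Nat.lt_succ_self k))
  rcases le_total (k+1) N with hN | hN
  · rw [Tnat, ← Finset.sum_subset (Finset.range_subset_range.2 hN)]
    intro p hp hp'
    simp only [Finset.mem_range, not_lt] at hp'
    rw [bit_vanish hk p hp', mul_zero, zero_mul]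
  · rw [Tnat, Finset.sum_subset (Finset.range_subset_range.2 hN)]
    intro p hp hp'
    simp only [Finset.mem_range, not_lt] at hp'
    rw [bit_vanish h p hp', mul_zero, zero_mul]

lemma Tnat_even (k : ℕ) : 2 ∣ Tnat k := by
  apply Finset.dvd_sum
  intro p hp
  rcases Nat.eq_zero_or_pos p with h | h
  · simp [h]
  · exact Dvd.dvd.mul_left (dvd_pow_self 2 h.ne') _

lemma sum_bits {k n : ℕ} (h : k < 2^n) :
    ∑ p ∈ Finset.range n, (k / 2^p % 2) * 2^p = k := by
  have key : ∀ n k : ℕ, ∑ p ∈ Finset.range n, (k / 2^p % 2) * 2^p = k % 2^n := by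
    intro n
    induction n with
    | zero => simp [Nat.mod_one]
    | succ n ih =>
      intro k
      rw [Finset.sum_range_succ, ih, pow_succ, Nat.mod_mul, mul_comm (2^n)]
  rw [key, Nat.mod_eq_of_lt h]

lemma Tnat_two_pow (m : ℕ) : Tnat (2^m) = m * 2^m := by
  rw [Tnat, Finset.sum_eq_single m]
  · rw [Nat.div_self (Nat.pow_pos (n := m) two_pos)]
    norm_num
  · intro p hp hpm
    rcases lt_or_gt_of_ne hpm with h | h
    · have : 2^m / 2^p % 2 = 0 := by
        rw [Nat.pow_div h.le two_pos]
        obtain ⟨c, hc⟩ := dvd_pow_self 2 (Nat.sub_ne_zero_of_lt h)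
        simp [hc, Nat.mul_mod_right]
      rw [this, mul_zero, zero_mul]
    · rw [bit_zero_of_lt (Nat.pow_lt_pow_right one_lt_two h), mul_zero, zero_mul]
  · intro h
    exact absurd (Finset.mem_range.2 (Nat.lt_succ_of_lt (@Nat.lt_two_pow_self m))) h

lemma Tnat_4k3 (k : ℕ) : Tnat (4*k+3) = 4 * Tnat k + 8*k + 2 := by
  have h1 : 4*k+3 < 2^(k+3) := by
    have := @Nat.lt_two_pow_self k
    have : 2^(k+3) = 8 * 2^k := by ring
    omega
  rw [Tnat_eq _ (k+3) h1, Finset.sum_range_succ', Finset.sum_range_succ']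
  have e0 : (0:ℕ) * ((4*k+3) / 2^0 % 2) * 2^0 = 0 := by norm_num
  have e1 : (0+1) * ((4*k+3) / 2^(0+1) % 2) * 2^(0+1) = 2 := by
    norm_num
    omega
  rw [e0, e1]
  have e2 : ∀ p ∈ Finset.range (k+1), (p+1+1) * ((4*k+3) / 2^(p+1+1) % 2) * 2^(p+1+1)
      = 4 * (p * (k / 2^p % 2) * 2^p) + 8 * ((k / 2^p % 2) * 2^p) := by
    intro p hp
    have hdiv : (4*k+3) / 2^(p+2) = k / 2^p := by
      rw [show (2:ℕ)^(p+2) = 4 * 2^p by ring, ← Nat.div_div_eq_div_mul]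
      congr 1
      omega
    show (p+1+1) * ((4*k+3) / 2^(p+2) % 2) * 2^(p+1+1) = _
    rw [hdiv]
    ring
  rw [Finset.sum_congr rfl e2, Finset.sum_add_distrib, ← Finset.mul_sum, ← Finset.mul_sum]
  have hk : k < 2^(k+1) := (@Nat.lt_two_pow_self k).trans (Nat.pow_lt_pow_right one_lt_two (Nat.lt_succ_self k))
  rw [sum_bits hk]
  rw [Tnat]

lemma key_nat (k m : ℕ) (h : k < 2^m) :
    ∑ p ∈ Finset.range m, (m-p) * (k/2^p%2) * 2^p + Tnat k = m * k := by
  rw [Tnat_eq k m h, ← Finset.sum_add_distrib]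
  have h2 : ∀ p ∈ Finset.range m, (m-p) * (k/2^p%2) * 2^p + p * (k/2^p%2) * 2^p
      = m * ((k/2^p%2) * 2^p) := by
    intro p hp
    have hpm := Finset.mem_range.1 hp
    rw [← add_mul, ← add_mul]
    have e : (m-p)+p = m := by omega
    rw [e, mul_assoc]
  rw [Finset.sum_congr rfl h2, ← Finset.mul_sum, sum_bits h]

/-! ### Dyadic evaluation of `gfun` -/

lemma binDigit_dyadic (k m j : ℕ) :
    binDigit j ((k:ℝ)/2^m) = ((k * 2^j / 2^m % 2 : ℕ) : ℝ) := by
  unfold binDigit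
  have h1 : (2:ℝ)^j * ((k:ℝ)/2^m) = ((k * 2^j : ℕ):ℝ) / ((2^m : ℕ):ℝ) := by
    push_cast; ring
  rw [h1]
  have h2 : ⌊((k * 2^j : ℕ):ℝ) / ((2^m : ℕ):ℝ)⌋ = ((k * 2^j / 2^m : ℕ) : ℤ) := by
    rw [← Int.natCast_floor_eq_floor (by positivity), Nat.floor_div_natCast, Nat.floor_natCast]
  rw [h2]
  push_cast [Int.emod_emod_of_dvd]
  norm_cast

lemma binDigit_dyadic_le (k m j : ℕ) (hj : j ≤ m) :
    binDigit j ((k:ℝ)/2^m) = ((k / 2^(m-j) % 2 : ℕ) : ℝ) := by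
  rw [binDigit_dyadic]
  congr 2
  rw [show (2:ℕ)^m = 2^(m-j) * 2^j by rw [← pow_add]; congr 1; omega]
  rw [Nat.mul_comm (2^(m-j)), ← Nat.div_div_eq_div_mul,
    Nat.mul_div_cancel _ (Nat.pow_pos (n := j) two_pos)]

lemma binDigit_dyadic_gt (k m j : ℕ) (hj : m < j) :
    binDigit j ((k:ℝ)/2^m) = 0 := by
  rw [binDigit_dyadic]
  have : k * 2^j / 2^m = k * 2^(j-m) := by
    rw [show (2:ℕ)^j = 2^m * 2^(j-m) by rw [← pow_add]; congr 1; omega, ← mul_assoc,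
      mul_right_comm k (2^m), Nat.mul_div_cancel _ (Nat.pow_pos (n := m) two_pos)]
  rw [this]
  have h2 : 2 ∣ k * 2^(j-m) := Dvd.dvd.mul_left (dvd_pow_self 2 (Nat.sub_ne_zero_of_lt hj)) k
  obtain ⟨c, hc⟩ := h2
  simp [hc, Nat.mul_mod_right]

lemma gfun_one : gfun 1 = 0 := by
  unfold gfun
  have h : ∀ n : ℕ, ((n + 1 : ℝ) / 2) * binDigit (n + 1) 1 / 2 ^ (n + 1) = 0 := by
    intro n
    have hb : binDigit (n+1) 1 = 0 := by
      unfold binDigit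
      rw [mul_one, show ((2:ℝ)^(n+1)) = ((2^(n+1) : ℤ) : ℝ) by push_cast; ring,
        Int.floor_intCast]
      simp [pow_succ, Int.mul_emod_left]
    rw [hb]
    ring
  simp [h]

lemma gfun_dyadic (k m : ℕ) (h : k < 2^m) :
    gfun ((k:ℝ)/2^m) = ((Tnat k : ℝ) - m*k)/2^(m+1) := by
  have hzero : ∀ n ∉ Finset.range m,
      ((n + 1 : ℝ) / 2) * binDigit (n + 1) ((k:ℝ)/2^m) / 2 ^ (n + 1) = 0 := by
    intro n hn
    simp only [Finset.mem_range, not_lt] at hn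
    rw [binDigit_dyadic_gt k m (n+1) (by omega)]
    ring
  rw [gfun, tsum_eq_sum hzero]
  have hterm : ∀ n ∈ Finset.range m,
      ((n + 1 : ℝ) / 2) * binDigit (n + 1) ((k:ℝ)/2^m) / 2 ^ (n + 1)
      = (((n+1) * (k / 2^(m-n-1) % 2) * 2^(m-n-1) : ℕ) : ℝ) / 2^(m+1) := by
    intro n hn
    have hn' := Finset.mem_range.1 hn
    rw [binDigit_dyadic_le k m (n+1) (by omega)]
    have e : m - (n+1) = m - n - 1 := by omega
    rw [e]
    have hpow : (2:ℝ)^(m+1) = 2^(m-n-1) * 2^(n+1) * 2 := by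
      rw [mul_assoc, ← pow_succ, ← pow_add]
      congr 1
      omega
    push_cast
    rw [hpow]
    have h1 : (0:ℝ) < 2^(m-n-1) := by positivity
    have h2 : (0:ℝ) < 2^(n+1) := by positivity
    field_simp
  rw [Finset.sum_congr rfl hterm, ← Finset.sum_div, ← Nat.cast_sum]
  have hre : ∑ n ∈ Finset.range m, (n+1) * (k / 2^(m-n-1) % 2) * 2^(m-n-1)
      = ∑ p ∈ Finset.range m, (m-p) * (k / 2^p % 2) * 2^p := by
    rw [← Finset.sum_range_reflect (fun p => (m-p) * (k / 2^p % 2) * 2^p) m]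
    apply Finset.sum_congr rfl
    intro n hn
    have hn' := Finset.mem_range.1 hn
    have e1 : m - 1 - n = m - n - 1 := by omega
    simp only [e1]
    have e3 : m - (m-n-1) = n+1 := by omega
    rw [e3]
  rw [hre]
  have hS : ((∑ p ∈ Finset.range m, (m-p) * (k/2^p%2) * 2^p : ℕ) : ℝ)
      = m*k - Tnat k := by
    have hk := key_nat k m h
    have hc : ((∑ p ∈ Finset.range m, (m-p) * (k/2^p%2) * 2^p : ℕ) : ℝ)
        + (Tnat k : ℝ) = (m:ℝ) * (k:ℝ) := by exact_mod_cast hk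
    linarith
  rw [hS]
  ring

lemma gfun_diff (k m : ℕ) (h : k+1 ≤ 2^m) :
    gfun (((k+1:ℕ):ℝ)/2^m) - gfun ((k:ℝ)/2^m)
      = ((Tnat (k+1):ℝ) - Tnat k - m)/2^(m+1) := by
  have hk : k < 2^m := by omega
  rcases eq_or_lt_of_le h with he | hlt
  · have h1 : ((k+1:ℕ):ℝ)/2^m = 1 := by
      rw [div_eq_one_iff_eq (by positivity)]
      rw [he]
      push_cast
      ring
    rw [h1, gfun_one, gfun_dyadic k m hk]
    have hT : (Tnat (k+1) : ℝ) = m * 2^m := by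
      rw [he, Tnat_two_pow]
      push_cast
      ring
    rw [hT]
    have hk' : (k:ℝ) = 2^m - 1 := by
      have : ((k+1:ℕ):ℝ) = ((2^m : ℕ):ℝ) := by exact_mod_cast congrArg (Nat.cast (R := ℝ)) he
      push_cast at this
      linarith
    rw [hk']
    have hp : (0:ℝ) < 2^(m+1) := by positivity
    field_simp
    ring
  · rw [gfun_dyadic (k+1) m hlt, gfun_dyadic k m hk]
    push_cast
    ring

lemma straddle (c : ℝ) (hc : c ∈ Set.Icc (0:ℝ) 1) (j : ℕ) :
    ∃ k : ℕ, k + 1 ≤ 2^j ∧ (k:ℝ)/2^j ≤ c ∧ c ≤ ((k+1:ℕ):ℝ)/2^j := by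
  have h2j : 1 ≤ 2^j := Nat.one_le_two_pow
  refine ⟨min ⌊(2:ℝ)^j * c⌋₊ (2^j - 1), by omega, ?_, ?_⟩
  · have h1 : ((min ⌊(2:ℝ)^j*c⌋₊ (2^j-1) : ℕ):ℝ) ≤ (⌊(2:ℝ)^j*c⌋₊ : ℝ) := by
      exact_mod_cast min_le_left _ _
    have h2 : ((⌊(2:ℝ)^j*c⌋₊ : ℕ):ℝ) ≤ 2^j * c :=
      Nat.floor_le (by have := hc.1; positivity)
    rw [div_le_iff₀ (by positivity)]
    nlinarith
  · rcases min_cases ⌊(2:ℝ)^j*c⌋₊ (2^j-1) with ⟨hmin, _⟩ | ⟨hmin, _⟩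
    · rw [hmin]
      have h2 : (2:ℝ)^j * c < (⌊(2:ℝ)^j*c⌋₊ : ℝ) + 1 := Nat.lt_floor_add_one _
      rw [le_div_iff₀ (by positivity)]
      push_cast
      nlinarith
    · rw [hmin]
      have he : (2^j - 1) + 1 = 2^j := by omega
      rw [he]
      rw [le_div_iff₀ (by positivity)]
      have : ((2^j:ℕ):ℝ) = 2^j := by push_cast; ring
      rw [this]
      nlinarith [hc.2, pow_pos (show (0:ℝ) < 2 by norm_num) j]

lemma part1 (c : ℝ) (hc : c ∈ Set.Icc (0:ℝ) 1) :
    ¬ DifferentiableWithinAt ℝ gfun (Set.Icc (0:ℝ) 1) c := by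
  intro hd
  set L := derivWithin gfun (Set.Icc (0:ℝ) 1) c with hLdef
  have hL := hd.hasDerivWithinAt
  have hlo := hasDerivWithinAt_iff_isLittleO.1 hL
  have hε := hlo.def (by norm_num : (0:ℝ) < 1/8)
  rw [eventually_nhdsWithin_iff] at hε
  obtain ⟨δ, hδ0, hball⟩ := Metric.eventually_nhds_iff.1 hε
  obtain ⟨m, hm⟩ := exists_pow_lt_of_lt_one hδ0 (by norm_num : (1/2:ℝ) < 1)
  have key : ∀ j, m ≤ j → ∃ k : ℕ,
      |((Tnat (k+1):ℝ) - Tnat k - j)/2 - L| ≤ 1/8 := by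
    intro j hj
    obtain ⟨k, hk1, hka, hkb⟩ := straddle c hc j
    refine ⟨k, ?_⟩
    set P : ℝ := 2^j with hP
    have hP0 : (0:ℝ) < P := by positivity
    have hcast : ((k+1:ℕ):ℝ) = (k:ℝ) + 1 := by push_cast; ring
    have hk1R : (k:ℝ) + 1 ≤ P := by
      rw [hP]
      exact_mod_cast hk1
    have hscale : 1/P ≤ (1/2:ℝ)^m := by
      have h1 : (1/P) = (1/2:ℝ)^j := by rw [hP, div_pow]; norm_num
      rw [h1]
      exact pow_le_pow_of_le_one (by norm_num) (by norm_num) hj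
    have hmem_a : (k:ℝ)/P ∈ Set.Icc (0:ℝ) 1 :=
      ⟨by positivity, by rw [div_le_one hP0]; linarith⟩
    have hmem_b : ((k+1:ℕ):ℝ)/P ∈ Set.Icc (0:ℝ) 1 :=
      ⟨by positivity, by rw [div_le_one hP0, hcast]; linarith⟩
    have hba : ((k+1:ℕ):ℝ)/P - (k:ℝ)/P = 1/P := by
      rw [hcast]; field_simp; ring
    have hda : dist ((k:ℝ)/P) c < δ := by
      rw [Real.dist_eq, abs_of_nonpos (by linarith [hka])]
      have : c ≤ ((k+1:ℕ):ℝ)/P := hkb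
      calc -((k:ℝ)/P - c) = c - (k:ℝ)/P := by ring
        _ ≤ ((k+1:ℕ):ℝ)/P - (k:ℝ)/P := by linarith
        _ = 1/P := hba
        _ ≤ (1/2:ℝ)^m := hscale
        _ < δ := hm
    have hdb : dist (((k+1:ℕ):ℝ)/P) c < δ := by
      rw [Real.dist_eq, abs_of_nonneg (by linarith [hkb])]
      calc ((k+1:ℕ):ℝ)/P - c ≤ ((k+1:ℕ):ℝ)/P - (k:ℝ)/P := by linarith [hka]
        _ = 1/P := hba
        _ ≤ (1/2:ℝ)^m := hscale
        _ < δ := hm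
    have h1 := hball hda hmem_a
    have h2 := hball hdb hmem_b
    simp only [Real.norm_eq_abs, smul_eq_mul] at h1 h2
    have habs_a : |(k:ℝ)/P - c| ≤ 1/P := by
      rw [abs_of_nonpos (by linarith [hka])]
      have : c ≤ ((k+1:ℕ):ℝ)/P := hkb
      nlinarith [hba]
    have habs_b : |((k+1:ℕ):ℝ)/P - c| ≤ 1/P := by
      rw [abs_of_nonneg (by linarith [hkb])]
      nlinarith [hba, hka]
    set D : ℝ := (Tnat (k+1):ℝ) - Tnat k - j with hD
    have hgd : gfun (((k+1:ℕ):ℝ)/P) - gfun ((k:ℝ)/P) = D/(2*P) := by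
      rw [hP]
      rw [gfun_diff k j hk1]
      rw [hD]
      congr 1
      rw [pow_succ]
      ring
    have hcomb : |gfun (((k+1:ℕ):ℝ)/P) - gfun ((k:ℝ)/P) - (1/P)*L| ≤ 1/8 * (1/P) := by
      have hid : gfun (((k+1:ℕ):ℝ)/P) - gfun ((k:ℝ)/P) - (1/P)*L
          = (gfun (((k+1:ℕ):ℝ)/P) - gfun c - (((k+1:ℕ):ℝ)/P - c)*L)
            - (gfun ((k:ℝ)/P) - gfun c - ((k:ℝ)/P - c)*L) := by
        rw [← hba]; ring
      rw [hid]
      calc |_ - _| ≤ |gfun (((k+1:ℕ):ℝ)/P) - gfun c - (((k+1:ℕ):ℝ)/P - c)*L|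
            + |gfun ((k:ℝ)/P) - gfun c - ((k:ℝ)/P - c)*L| := abs_sub _ _
        _ ≤ 1/8 * |((k+1:ℕ):ℝ)/P - c| + 1/8 * |(k:ℝ)/P - c| := by
            exact add_le_add h2 h1
        _ ≤ 1/8 * (((k+1:ℕ):ℝ)/P - c) + 1/8 * (c - (k:ℝ)/P) := by
            rw [abs_of_nonneg (by linarith [hkb]), abs_of_nonpos (by linarith [hka])]
            apply le_of_eq
            ring
        _ = 1/8 * (((k+1:ℕ):ℝ)/P - (k:ℝ)/P) := by ring
        _ = 1/8 * (1/P) := by rw [hba]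
    rw [hgd] at hcomb
    have hfac : D/2 - L = P * (D/(2*P) - (1/P)*L) := by field_simp
    rw [hfac, abs_mul, abs_of_pos hP0]
    calc P * |D/(2*P) - (1/P)*L| ≤ P * (1/8 * (1/P)) := by
          apply mul_le_mul_of_nonneg_left hcomb hP0.le
      _ = 1/8 := by field_simp
  obtain ⟨k1, h1⟩ := key m le_rfl
  obtain ⟨k2, h2⟩ := key (m+1) (Nat.le_succ m)
  obtain ⟨u1, hu1⟩ := Tnat_even (k1+1)
  obtain ⟨v1, hv1⟩ := Tnat_even k1
  obtain ⟨u2, hu2⟩ := Tnat_even (k2+1)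
  obtain ⟨v2, hv2⟩ := Tnat_even k2
  set z : ℤ := (u1:ℤ) - v1 - u2 + v2 with hz
  have hzz : ((Tnat (k1+1):ℝ) - Tnat k1 - m)/2 - ((Tnat (k2+1):ℝ) - Tnat k2 - (m+1))/2
      = (z:ℝ) + 1/2 := by
    rw [hu1, hv1, hu2, hv2, hz]
    push_cast
    ring
  have hzb : 1/2 ≤ |(z:ℝ) + 1/2| := by
    rcases le_or_gt 0 z with h | h
    · have h0 : (0:ℝ) ≤ (z:ℝ) := by exact_mod_cast h
      calc (1/2:ℝ) ≤ (z:ℝ) + 1/2 := by linarith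
        _ ≤ |(z:ℝ) + 1/2| := le_abs_self _
    · have h0 : (z:ℝ) ≤ -1 := by
        have : z ≤ -1 := by omega
        exact_mod_cast this
      calc (1/2:ℝ) ≤ -((z:ℝ) + 1/2) := by linarith
        _ ≤ |(z:ℝ) + 1/2| := neg_le_abs _
  have htri : |((Tnat (k1+1):ℝ) - Tnat k1 - m)/2 - ((Tnat (k2+1):ℝ) - Tnat k2 - (m+1))/2|
      ≤ 1/4 := by
    have hcast2 : (((m:ℕ)+1:ℕ):ℝ) = (m:ℝ) + 1 := by push_cast; ring
    calc |_ - _| ≤ |((Tnat (k1+1):ℝ) - Tnat k1 - m)/2 - L|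
          + |L - ((Tnat (k2+1):ℝ) - Tnat k2 - (m+1))/2| := abs_sub_le _ _ _
      _ ≤ 1/8 + 1/8 := by
          apply add_le_add h1
          rw [abs_sub_comm]
          have : ((Tnat (k2+1):ℝ) - Tnat k2 - ((m+1:ℕ):ℝ))/2
              = ((Tnat (k2+1):ℝ) - Tnat k2 - ((m:ℝ)+1))/2 := by push_cast; ring
          rw [← this]
          exact h2
      _ = 1/4 := by norm_num
  rw [hzz] at htri
  linarith

set_option maxHeartbeats 1000000 in
lemma part2 (n : ℕ) (a b : ℝ) (ha : 0 ≤ a) (hb : b ≤ 1) (hab : b - a = 1 / 2 ^ n) :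
    ∃ x ∈ Set.Icc a b, ∃ y ∈ Set.Icc a b, x ≠ y ∧
      1 / 2 ^ (n + 2) < |gfun x - gfun y| ∧
      1 / 4 < |gfun x - gfun y| / |x - y| := by
  set A : ℝ := 2^n with hA
  have hA0 : (0:ℝ) < A := by positivity
  have e1 : (2:ℝ)^(n+1) = 2*A := by rw [hA, pow_succ]; ring
  have e2 : (2:ℝ)^(n+2) = 4*A := by rw [hA, pow_add]; ring
  have e3 : (2:ℝ)^(n+3) = 8*A := by rw [hA, pow_add]; ring
  have e4 : (2:ℝ)^(n+4) = 16*A := by rw [hA, pow_add]; ring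
  set k : ℕ := ⌈(2:ℝ)^(n+1) * a⌉₊ with hk
  have h2a : (0:ℝ) ≤ 2^(n+1)*a := by positivity
  have hk1 : (2:ℝ)^(n+1)*a ≤ k := Nat.le_ceil _
  have hk2 : (k:ℝ) < 2^(n+1)*a + 1 := Nat.ceil_lt_add_one h2a
  have ha1 : a ≤ 1 - 1/A := by
    have : b = a + 1/A := by rw [hA] at hab ⊢; linarith
    linarith
  have hklt : k < 2^(n+1) := by
    have hr : (k:ℝ) < ((2^(n+1):ℕ):ℝ) := by
      push_cast
      rw [e1] at hk1 hk2 ⊢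
      have h5 : 2*A*a ≤ 2*A - 2 := by
        have h6 := mul_le_mul_of_nonneg_left ha1 (by linarith : (0:ℝ) ≤ 2*A)
        have hexp : 2*A*(1-1/A) = 2*A - 2 := by field_simp
        linarith [hexp ▸ h6]
      linarith
    exact_mod_cast hr
  have h4k : 4*k+3 < 2^(n+3) := by
    have : (2:ℕ)^(n+3) = 4 * 2^(n+1) := by ring
    omega
  set x : ℝ := (k:ℝ)/2^(n+1) with hx
  set y : ℝ := ((4*k+3:ℕ):ℝ)/2^(n+3) with hy
  have hxA : x = (k:ℝ)/(2*A) := by rw [hx, e1]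
  have hyA : y = (4*(k:ℝ)+3)/(8*A) := by rw [hy, e3]; push_cast; ring
  have hax : a ≤ x := by
    rw [hxA, le_div_iff₀ (by positivity)]
    rw [e1] at hk1
    nlinarith
  have hxy : x < y := by
    rw [hxA, hyA, div_lt_div_iff₀ (by positivity) (by positivity)]
    nlinarith
  have hyb : y ≤ b := by
    have hbA : b = a + 1/A := by rw [hA] at hab ⊢; linarith
    rw [hyA, div_le_iff₀ (by positivity), hbA]
    have hexp : (a + 1/A)*(8*A) = 8*(A*a) + 8 := by field_simp
    have hk2' : (k:ℝ) < 2*(A*a)+1 := by nlinarith [hk2]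
    linarith [hexp, hk2']
  have hxmem : x ∈ Set.Icc a b := ⟨hax, by linarith⟩
  have hymem : y ∈ Set.Icc a b := ⟨by linarith, hyb⟩
  have hgx : gfun x = ((Tnat k:ℝ) - (n+1)*k)/2^(n+2) := by
    rw [hx]
    have := gfun_dyadic k (n+1) hklt
    rw [this]
    push_cast
    ring
  have hgy : gfun y = ((4*(Tnat k:ℝ) + 8*k + 2) - (n+3)*(4*k+3))/2^(n+4) := by
    rw [hy]
    have h := gfun_dyadic (4*k+3) (n+3) h4k
    rw [h]
    have hT : ((Tnat (4*k+3):ℕ):ℝ) = 4*(Tnat k:ℝ) + 8*(k:ℝ) + 2 := by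
      rw [Tnat_4k3]
      push_cast
      ring
    rw [hT]
    push_cast
    ring
  have hdiff : gfun x - gfun y = (3*(n:ℝ)+7)/(16*A) := by
    rw [hgx, hgy, e2, e4]
    field_simp
    ring
  have hdpos : (0:ℝ) < (3*(n:ℝ)+7)/(16*A) := by positivity
  have habsg : |gfun x - gfun y| = (3*(n:ℝ)+7)/(16*A) := by
    rw [hdiff, abs_of_pos hdpos]
  have hyx : y - x = 3/(8*A) := by
    rw [hxA, hyA]
    field_simp
    ring
  have habsxy : |x - y| = 3/(8*A) := by
    rw [abs_sub_comm, abs_of_pos (by linarith), hyx]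
  refine ⟨x, hxmem, y, hymem, ne_of_lt hxy, ?_, ?_⟩
  · rw [habsg, e2]
    rw [div_lt_div_iff₀ (by positivity) (by positivity)]
    have hn : (0:ℝ) ≤ (n:ℝ) := Nat.cast_nonneg n
    nlinarith [hA0, hn]
  · rw [habsg, habsxy]
    have hq : (3*(n:ℝ)+7)/(16*A) / (3/(8*A)) = (3*(n:ℝ)+7)/6 := by
      field_simp
      ring
    rw [hq]
    rw [lt_div_iff₀ (by norm_num : (0:ℝ) < 6)]
    have hn : (0:ℝ) ≤ (n:ℝ) := Nat.cast_nonneg n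
    linarith

theorem stmt19 :
    -- g is nowhere differentiable on [0,1]
    (∀ x ∈ Set.Icc (0 : ℝ) 1,
      ¬ DifferentiableWithinAt ℝ gfun (Set.Icc (0 : ℝ) 1) x) ∧
    -- each subinterval of [0,1] of length 1/2^n contains a pair of points at
    -- gfun-distance greater than 1/2^{n+2}, giving difference quotients > 1/4
    (∀ n : ℕ, ∀ a b : ℝ, 0 ≤ a → b ≤ 1 → b - a = 1 / 2 ^ n →
      ∃ x ∈ Set.Icc a b, ∃ y ∈ Set.Icc a b, x ≠ y ∧
        1 / 2 ^ (n + 2) < |gfun x - gfun y| ∧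
        1 / 4 < |gfun x - gfun y| / |x - y|) :=
  ⟨part1, part2⟩
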